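/- arXiv:2308.06357 — 2 statements merged into one kernel-verified Lean document; each statement's English description precedes it below -/
import Mathlib

section
/- For the function U(ρ,θ) = (ρ^{1/2} cos(θ/2))^{2s} in Cartesian coordinates τ = ρ cos θ, η = ρ sin θ (with θ ∈ (-π,π)), the second derivative in τ satisfies |U_{ττ}| ≤ (2/ρ) U_τ at every point with ρ > 0. -/
open Real Set

/-- The function `U(τ,η) = (ρ^{1/2} cos(θ/2))^{2s}` in Cartesian coordinates, where
`ρ = √(τ²+η²)` and `θ = arg(τ + iη)`. -/
noncomputable def Ucart (s τ η : ℝ) : ℝ :=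
  (Real.sqrt (Real.sqrt (τ ^ 2 + η ^ 2)) *
    Real.cos (Complex.arg ⟨τ, η⟩ / 2)) ^ (2 * s)

namespace UcartAux

lemma abs_le_r (t η : ℝ) : |t| ≤ Real.sqrt (t ^ 2 + η ^ 2) := by
  rw [← Real.sqrt_sq_eq_abs]
  exact Real.sqrt_le_sqrt (by nlinarith [sq_nonneg η])

lemma r_pos {t η : ℝ} (h : 0 < Real.sqrt (t ^ 2 + η ^ 2) + t) :
    0 < Real.sqrt (t ^ 2 + η ^ 2) := by
  have h1 := abs_le_r t η
  have h2 := neg_abs_le t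
  have h3 := le_abs_self t
  linarith

/-- The key identity: `Ucart s t η = ((r + t)/2)^s` where `r = √(t²+η²)`. -/
lemma ucart_eq {s : ℝ} (t η : ℝ) (h : 0 < Real.sqrt (t ^ 2 + η ^ 2) + t) :
    Ucart s t η = ((Real.sqrt (t ^ 2 + η ^ 2) + t) / 2) ^ s := by
  have hz : (⟨t, η⟩ : ℂ) ≠ 0 := by
    intro hz0
    have ht : t = 0 := congrArg Complex.re hz0
    have hη : η = 0 := congrArg Complex.im hz0
    rw [ht, hη] at h
    simp at h
  set r := Real.sqrt (t ^ 2 + η ^ 2) with hr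
  have hrpos : 0 < r := r_pos h
  have habs : ‖(⟨t, η⟩ : ℂ)‖ = r := by
    rw [Complex.norm_def, Complex.normSq_mk, hr]
    ring_nf
  have hcos : Real.cos (Complex.arg ⟨t, η⟩) = t / r := by
    rw [Complex.cos_arg hz, habs]
  have hcoshalf : Real.cos (Complex.arg ⟨t, η⟩ / 2)
      = Real.sqrt ((1 + t / r) / 2) := by
    rw [Real.cos_half (Complex.arg_mem_Ioc _).1.le (Complex.arg_le_pi _), hcos]
  have hmul : Real.sqrt r * Real.sqrt ((1 + t / r) / 2)
      = Real.sqrt ((r + t) / 2) := by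
    rw [← Real.sqrt_mul hrpos.le]
    congr 1
    field_simp
  have hbase : 0 ≤ (r + t) / 2 := by linarith
  rw [Ucart, hcoshalf, ← hr, hmul, Real.sqrt_eq_rpow,
    ← Real.rpow_mul hbase]
  congr 1
  ring

lemma hasDerivAt_r (η t : ℝ) (h : 0 < Real.sqrt (t ^ 2 + η ^ 2)) :
    HasDerivAt (fun t : ℝ => Real.sqrt (t ^ 2 + η ^ 2))
      (t / Real.sqrt (t ^ 2 + η ^ 2)) t := by
  have hne : t ^ 2 + η ^ 2 ≠ 0 := by
    intro h0
    rw [h0] at h; simp at h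
  have h1 : HasDerivAt (fun t : ℝ => t ^ 2 + η ^ 2) (2 * t) t := by
    simpa using (hasDerivAt_pow 2 t).add_const (η ^ 2)
  have := (Real.hasDerivAt_sqrt hne).comp t h1
  refine this.congr_deriv ?_
  field_simp

lemma hasDerivAt_g (s η t : ℝ) (h : 0 < Real.sqrt (t ^ 2 + η ^ 2) + t) :
    HasDerivAt (fun t : ℝ => ((Real.sqrt (t ^ 2 + η ^ 2) + t) / 2) ^ s)
      (s * ((Real.sqrt (t ^ 2 + η ^ 2) + t) / 2) ^ s / Real.sqrt (t ^ 2 + η ^ 2))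
      t := by
  set r := Real.sqrt (t ^ 2 + η ^ 2) with hr
  have hrpos : 0 < r := r_pos h
  have hf : HasDerivAt (fun t : ℝ => (Real.sqrt (t ^ 2 + η ^ 2) + t) / 2)
      ((r + t) / (2 * r)) t := by
    have := ((hasDerivAt_r η t hrpos).add (hasDerivAt_id t)).div_const 2
    refine this.congr_deriv ?_
    field_simp
    rw [hr]
    rw [add_mul, div_mul_cancel₀ _ (by rw [← hr]; exact hrpos.ne'), one_mul, add_comm]
  have hfpos : 0 < (r + t) / 2 := by linarith
  have hpow := Real.hasDerivAt_rpow_const (x := (r + t) / 2) (p := s)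
    (Or.inl hfpos.ne')
  have := hpow.comp t hf
  refine this.congr_deriv ?_
  rw [Real.rpow_sub_one hfpos.ne']
  field_simp

lemma hasDerivAt_h (s η t : ℝ) (h : 0 < Real.sqrt (t ^ 2 + η ^ 2) + t) :
    HasDerivAt (fun t : ℝ =>
        s * ((Real.sqrt (t ^ 2 + η ^ 2) + t) / 2) ^ s / Real.sqrt (t ^ 2 + η ^ 2))
      (s * ((Real.sqrt (t ^ 2 + η ^ 2) + t) / 2) ^ s *
        (s - t / Real.sqrt (t ^ 2 + η ^ 2)) / (Real.sqrt (t ^ 2 + η ^ 2)) ^ 2)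
      t := by
  set r := Real.sqrt (t ^ 2 + η ^ 2) with hr
  have hrpos : 0 < r := r_pos h
  have hg := (hasDerivAt_g s η t h).const_mul s
  have hrinv := (hasDerivAt_r η t hrpos).inv hrpos.ne'
  have := (hg.mul hrinv)
  have heq : ∀ t : ℝ, s * ((Real.sqrt (t ^ 2 + η ^ 2) + t) / 2) ^ s /
      Real.sqrt (t ^ 2 + η ^ 2)
      = (fun t => s * (((Real.sqrt (t ^ 2 + η ^ 2) + t) / 2) ^ s)) t *
        (fun t => (Real.sqrt (t ^ 2 + η ^ 2))⁻¹) t := by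
    intro t; simp [div_eq_mul_inv]
  rw [show (fun t : ℝ => s * ((Real.sqrt (t ^ 2 + η ^ 2) + t) / 2) ^ s /
      Real.sqrt (t ^ 2 + η ^ 2)) = fun t =>
      (fun t => s * (((Real.sqrt (t ^ 2 + η ^ 2) + t) / 2) ^ s)) t *
        (fun t => (Real.sqrt (t ^ 2 + η ^ 2))⁻¹) t from funext heq]
  refine this.congr_deriv ?_
  rw [← hr]
  field_simp
  rw [Pi.inv_apply, ← hr, pow_two r, mul_assoc, mul_inv_cancel_right₀ hrpos.ne']
  ring

end UcartAux

/-- At every point with `ρ > 0` and `θ ∈ (-π, π)`, the second τ-derivative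
of `U` satisfies `|U_{ττ}| ≤ (2/ρ) U_τ`. -/
theorem stmt_2 (s : ℝ) (hs : s ∈ Set.Ioo (0:ℝ) 1) (τ η : ℝ)
    (hρ : 0 < Real.sqrt (τ ^ 2 + η ^ 2))
    (hθ : Complex.arg ⟨τ, η⟩ ∈ Set.Ioo (-Real.pi) Real.pi) :
    |deriv (fun t : ℝ => deriv (fun t' : ℝ => Ucart s t' η) t) τ|
      ≤ (2 / Real.sqrt (τ ^ 2 + η ^ 2)) * deriv (fun t : ℝ => Ucart s t η) τ := by
  set r := Real.sqrt (τ ^ 2 + η ^ 2) with hrdef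
  -- first: r + τ > 0
  have habs : |τ| ≤ r := UcartAux.abs_le_r τ η
  have hrt : 0 < r + τ := by
    by_contra hc
    push_neg at hc
    have hτ : τ = -r := by
      have := neg_abs_le τ
      have := le_abs_self τ
      linarith [UcartAux.abs_le_r τ η]
    have hτneg : τ < 0 := by rw [hτ]; linarith
    have hη : η = 0 := by
      have h1 : r ^ 2 = τ ^ 2 + η ^ 2 := Real.sq_sqrt (by positivity)
      have : τ ^ 2 = r ^ 2 := by rw [hτ]; ring
      nlinarith
    have : Complex.arg ⟨τ, η⟩ = Real.pi :=
      Complex.arg_eq_pi_iff.mpr ⟨hτneg, hη⟩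
    rw [this] at hθ
    exact lt_irrefl _ hθ.2
  -- the open set where things are nice
  have hopen : IsOpen {t : ℝ | 0 < Real.sqrt (t ^ 2 + η ^ 2) + t} := by
    apply isOpen_lt continuous_const
    exact (Real.continuous_sqrt.comp (by continuity)).add continuous_id
  have hmem : {t : ℝ | 0 < Real.sqrt (t ^ 2 + η ^ 2) + t} ∈ nhds τ :=
    hopen.mem_nhds hrt
  -- Ucart agrees with g near τ (indeed near any point of the set)
  -- first derivative identity on the set:
  have hd1 : ∀ t ∈ {t : ℝ | 0 < Real.sqrt (t ^ 2 + η ^ 2) + t},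
      deriv (fun t' : ℝ => Ucart s t' η) t
        = s * ((Real.sqrt (t ^ 2 + η ^ 2) + t) / 2) ^ s
            / Real.sqrt (t ^ 2 + η ^ 2) := by
    intro t ht
    have hEq : (fun t' : ℝ => Ucart s t' η)
        =ᶠ[nhds t] fun t' => ((Real.sqrt (t' ^ 2 + η ^ 2) + t') / 2) ^ s := by
      filter_upwards [hopen.mem_nhds ht] with x hx
      exact UcartAux.ucart_eq x η hx
    rw [hEq.deriv_eq, (UcartAux.hasDerivAt_g s η t ht).deriv]
  -- second derivative:
  have hd2 : deriv (fun t : ℝ => deriv (fun t' : ℝ => Ucart s t' η) t) τ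
      = s * ((r + τ) / 2) ^ s * (s - τ / r) / r ^ 2 := by
    have hEq : (fun t : ℝ => deriv (fun t' : ℝ => Ucart s t' η) t)
        =ᶠ[nhds τ] fun t =>
          s * ((Real.sqrt (t ^ 2 + η ^ 2) + t) / 2) ^ s
            / Real.sqrt (t ^ 2 + η ^ 2) := by
      filter_upwards [hmem] with x hx
      exact hd1 x hx
    rw [hEq.deriv_eq, (UcartAux.hasDerivAt_h s η τ hrt).deriv]
  rw [hd2, hd1 τ hrt, ← hrdef]
  -- now the arithmetic
  have hfpos : 0 < ((r + τ) / 2) ^ s := Real.rpow_pos_of_pos (by linarith) s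
  have hGpos : 0 < s * ((r + τ) / 2) ^ s / r :=
    div_pos (mul_pos hs.1 hfpos) hρ
  have hratio : |s - τ / r| ≤ 2 := by
    rw [abs_le]
    have h1 : |τ / r| ≤ 1 := by
      rw [abs_div, abs_of_pos hρ]
      exact div_le_one_of_le₀ habs hρ.le
    rw [abs_le] at h1
    constructor <;> nlinarith [hs.1, hs.2]
  calc |s * ((r + τ) / 2) ^ s * (s - τ / r) / r ^ 2|
      = (s * ((r + τ) / 2) ^ s / r) * |s - τ / r| / r := by
        rw [abs_div, abs_mul, abs_of_pos (mul_pos hs.1 hfpos),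
          abs_of_pos (by positivity : (0:ℝ) < r ^ 2)]
        ring
    _ ≤ (s * ((r + τ) / 2) ^ s / r) * 2 / r := by
        gcongr
    _ = (2 / r) * (s * ((r + τ) / 2) ^ s / r) := by ring
end

section
/- Let s ∈ (0,1), a = 1-2s, and ζ ∈ ℝ. Define v_ζ(τ,η) = (1 + (ζ/4)ρ) U(τ,η) where ρ = √(τ²+η²) and U(τ,η) = (ρ^{1/2} cos(θ/2))^{2s}. Then in the upper half-plane {η > 0}, L_a v_ζ := ∂²_τ v_ζ + ∂²_η v_ζ + (a/η) ∂_η v_ζ = (ζ/(1-a)) U_τ. -/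
open Real Set

/-- The function `v_ζ(τ,η) = (1 + (ζ/4) ρ) U(τ,η)` with `ρ = √(τ²+η²)`. -/
noncomputable def vzeta (s ζ τ η : ℝ) : ℝ :=
  (1 + (ζ / 4) * Real.sqrt (τ ^ 2 + η ^ 2)) * Ucart s τ η

lemma sqrtpos {t e : ℝ} (he : e ≠ 0) : 0 < Real.sqrt (t^2+e^2) :=
  Real.sqrt_pos.2 (by positivity)

lemma wpos {t e : ℝ} (he : e ≠ 0) : 0 < (Real.sqrt (t^2+e^2) + t)/2 := by
  have h2 : 0 < e^2 := by positivity
  have h1 : |t| < Real.sqrt (t^2+e^2) := by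
    rw [← Real.sqrt_sq_eq_abs]
    exact Real.sqrt_lt_sqrt (sq_nonneg t) (by linarith)
  have := neg_abs_le t
  linarith

lemma hasDerivAt_r1 (e x : ℝ) (he : e ≠ 0) :
    HasDerivAt (fun t : ℝ => Real.sqrt (t^2+e^2)) (x / Real.sqrt (x^2+e^2)) x := by
  have h1 : HasDerivAt (fun t : ℝ => t^2+e^2) (2*x) x := by
    simpa using (hasDerivAt_pow 2 x).add_const (e^2)
  have h2 := h1.sqrt (by positivity)
  convert h2 using 1
  have hr := sqrtpos (t := x) he
  field_simp

lemma hasDerivAt_r2 (t x : ℝ) (hx : x ≠ 0) :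
    HasDerivAt (fun e : ℝ => Real.sqrt (t^2+e^2)) (x / Real.sqrt (t^2+x^2)) x := by
  have h1 : HasDerivAt (fun e : ℝ => t^2+e^2) (2*x) x := by
    simpa using ((hasDerivAt_pow 2 x).const_add (t^2))
  have h2 := h1.sqrt (by positivity)
  convert h2 using 1
  have hr : 0 < Real.sqrt (t^2+x^2) := Real.sqrt_pos.2 (by positivity)
  field_simp

noncomputable def Vc (s ζ t e : ℝ) : ℝ :=
  (1 + ζ/4 * Real.sqrt (t^2+e^2)) * ((Real.sqrt (t^2+e^2) + t)/2) ^ s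

noncomputable def d1 (s ζ e x : ℝ) : ℝ :=
  ζ/4 * (x / Real.sqrt (x^2+e^2)) * ((Real.sqrt (x^2+e^2) + x)/2) ^ s
  + (1 + ζ/4 * Real.sqrt (x^2+e^2)) *
      ((x / Real.sqrt (x^2+e^2) + 1)/2 * s * ((Real.sqrt (x^2+e^2) + x)/2) ^ (s-1))

noncomputable def d2 (s ζ t x : ℝ) : ℝ :=
  ζ/4 * (x / Real.sqrt (t^2+x^2)) * ((Real.sqrt (t^2+x^2) + t)/2) ^ s
  + (1 + ζ/4 * Real.sqrt (t^2+x^2)) *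
      (x / Real.sqrt (t^2+x^2) / 2 * s * ((Real.sqrt (t^2+x^2) + t)/2) ^ (s-1))

lemma hasDerivAt_Vc_t (s ζ e x : ℝ) (he : e ≠ 0) :
    HasDerivAt (fun t => Vc s ζ t e) (d1 s ζ e x) x := by
  have hr := hasDerivAt_r1 e x he
  have hw : HasDerivAt (fun t : ℝ => (Real.sqrt (t^2+e^2) + t)/2)
      ((x / Real.sqrt (x^2+e^2) + 1)/2) x := (hr.add (hasDerivAt_id x)).div_const 2
  have hP := hw.rpow_const (p := s) (Or.inl (wpos (t := x) he).ne')
  have hC : HasDerivAt (fun t : ℝ => 1 + ζ/4 * Real.sqrt (t^2+e^2))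
      (ζ/4 * (x / Real.sqrt (x^2+e^2))) x := (hr.const_mul (ζ/4)).const_add 1
  exact hC.mul hP

lemma hasDerivAt_Vc_e (s ζ t x : ℝ) (hx : x ≠ 0) :
    HasDerivAt (fun e => Vc s ζ t e) (d2 s ζ t x) x := by
  have hr := hasDerivAt_r2 t x hx
  have hw : HasDerivAt (fun e : ℝ => (Real.sqrt (t^2+e^2) + t)/2)
      (x / Real.sqrt (t^2+x^2) / 2) x := by
    simpa using ((hr.add_const t).div_const 2)
  have hP := hw.rpow_const (p := s) (Or.inl (wpos (t := t) (e := x) hx).ne')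
  have hC : HasDerivAt (fun e : ℝ => 1 + ζ/4 * Real.sqrt (t^2+e^2))
      (ζ/4 * (x / Real.sqrt (t^2+x^2))) x := (hr.const_mul (ζ/4)).const_add 1
  exact hC.mul hP

noncomputable def dd1 (s ζ e x : ℝ) : ℝ :=
  (ζ/4 * ((1 * Real.sqrt (x^2+e^2) - x * (x / Real.sqrt (x^2+e^2))) / Real.sqrt (x^2+e^2)^2)) * ((Real.sqrt (x^2+e^2) + x)/2) ^ s + ζ/4 * (x / Real.sqrt (x^2+e^2)) * (((x / Real.sqrt (x^2+e^2) + 1)/2) * s * ((Real.sqrt (x^2+e^2) + x)/2) ^ (s-1))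
  + ((ζ/4 * (x / Real.sqrt (x^2+e^2))) * (((x / Real.sqrt (x^2+e^2) + 1)/2) * s * ((Real.sqrt (x^2+e^2) + x)/2) ^ (s-1))
    + (1 + ζ/4 * Real.sqrt (x^2+e^2)) * (((1 * Real.sqrt (x^2+e^2) - x * (x / Real.sqrt (x^2+e^2))) / Real.sqrt (x^2+e^2)^2)/2 * s * ((Real.sqrt (x^2+e^2) + x)/2) ^ (s-1) + ((x / Real.sqrt (x^2+e^2) + 1)/2) * s * (((x / Real.sqrt (x^2+e^2) + 1)/2) * (s-1) * ((Real.sqrt (x^2+e^2) + x)/2) ^ (s-1-1))))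

noncomputable def dd2 (s ζ t x : ℝ) : ℝ :=
  (ζ/4 * ((1 * Real.sqrt (t^2+x^2) - x * (x / Real.sqrt (t^2+x^2))) / Real.sqrt (t^2+x^2)^2)) * ((Real.sqrt (t^2+x^2) + t)/2) ^ s + ζ/4 * (x / Real.sqrt (t^2+x^2)) * ((x / Real.sqrt (t^2+x^2) / 2) * s * ((Real.sqrt (t^2+x^2) + t)/2) ^ (s-1))
  + ((ζ/4 * (x / Real.sqrt (t^2+x^2))) * ((x / Real.sqrt (t^2+x^2) / 2) * s * ((Real.sqrt (t^2+x^2) + t)/2) ^ (s-1))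
    + (1 + ζ/4 * Real.sqrt (t^2+x^2)) * (((1 * Real.sqrt (t^2+x^2) - x * (x / Real.sqrt (t^2+x^2))) / Real.sqrt (t^2+x^2)^2)/2 * s * ((Real.sqrt (t^2+x^2) + t)/2) ^ (s-1) + (x / Real.sqrt (t^2+x^2) / 2) * s * ((x / Real.sqrt (t^2+x^2) / 2) * (s-1) * ((Real.sqrt (t^2+x^2) + t)/2) ^ (s-1-1))))

lemma hasDerivAt_d1 (s ζ e x : ℝ) (he : e ≠ 0) :
    HasDerivAt (fun x => d1 s ζ e x) (dd1 s ζ e x) x := by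
  have hrpos := sqrtpos (t := x) he
  have hrne : Real.sqrt (x^2+e^2) ≠ 0 := hrpos.ne'
  have hwne : ((Real.sqrt (x^2+e^2) + x)/2) ≠ 0 := (wpos (t := x) he).ne'
  have hr := hasDerivAt_r1 e x he
  have hq : HasDerivAt (fun y : ℝ => y / Real.sqrt (y^2+e^2))
      ((1 * Real.sqrt (x^2+e^2) - x * (x / Real.sqrt (x^2+e^2))) / Real.sqrt (x^2+e^2)^2) x := (hasDerivAt_id x).div hr hrne
  have hw : HasDerivAt (fun t : ℝ => (Real.sqrt (t^2+e^2) + t)/2)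
      ((x / Real.sqrt (x^2+e^2) + 1)/2) x := (hr.add (hasDerivAt_id x)).div_const 2
  have hP := hw.rpow_const (p := s) (Or.inl hwne)
  have hQ := hw.rpow_const (p := s-1) (Or.inl hwne)
  have hT1 := (hq.const_mul (ζ/4)).mul hP
  have hE := (((hq.add_const 1).div_const 2).mul_const s).mul hQ
  have hC : HasDerivAt (fun t : ℝ => 1 + ζ/4 * Real.sqrt (t^2+e^2))
      (ζ/4 * (x / Real.sqrt (x^2+e^2))) x := (hr.const_mul (ζ/4)).const_add 1
  have hT2 := hC.mul hE
  have := hT1.add hT2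
  unfold d1 dd1
  exact this

lemma hasDerivAt_d2 (s ζ t x : ℝ) (hx : x ≠ 0) :
    HasDerivAt (fun x => d2 s ζ t x) (dd2 s ζ t x) x := by
  have hrpos : 0 < Real.sqrt (t^2+x^2) := Real.sqrt_pos.2 (by positivity)
  have hrne : Real.sqrt (t^2+x^2) ≠ 0 := hrpos.ne'
  have hwne : ((Real.sqrt (t^2+x^2) + t)/2) ≠ 0 := (wpos (t := t) (e := x) hx).ne'
  have hr := hasDerivAt_r2 t x hx
  have hq : HasDerivAt (fun y : ℝ => y / Real.sqrt (t^2+y^2))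
      ((1 * Real.sqrt (t^2+x^2) - x * (x / Real.sqrt (t^2+x^2))) / Real.sqrt (t^2+x^2)^2) x := (hasDerivAt_id x).div hr hrne
  have hw : HasDerivAt (fun e : ℝ => (Real.sqrt (t^2+e^2) + t)/2)
      (x / Real.sqrt (t^2+x^2) / 2) x := by simpa using ((hr.add_const t).div_const 2)
  have hP := hw.rpow_const (p := s) (Or.inl hwne)
  have hQ := hw.rpow_const (p := s-1) (Or.inl hwne)
  have hT1 := (hq.const_mul (ζ/4)).mul hP
  have hE := ((hq.div_const 2).mul_const s).mul hQ
  have hC : HasDerivAt (fun e : ℝ => 1 + ζ/4 * Real.sqrt (t^2+e^2))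
      (ζ/4 * (x / Real.sqrt (t^2+x^2))) x := (hr.const_mul (ζ/4)).const_add 1
  have hT2 := hC.mul hE
  have := hT1.add hT2
  unfold d2 dd2
  exact this


lemma Ucart_eq' (s t e : ℝ) (he : 0 < e) :
    (Real.sqrt (Real.sqrt (t ^ 2 + e ^ 2)) *
      Real.cos (Complex.arg ⟨t, e⟩ / 2)) ^ (2 * s)
    = ((Real.sqrt (t ^ 2 + e ^ 2) + t) / 2) ^ s := by
  have hz : (⟨t, e⟩ : ℂ) ≠ 0 := by
    simp [Complex.ext_iff]
    intro _ h; exact absurd h (ne_of_gt he)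
  have hr : (0:ℝ) < Real.sqrt (t^2+e^2) := sqrtpos (ne_of_gt he)
  have habs : ‖(⟨t, e⟩ : ℂ)‖ = Real.sqrt (t^2+e^2) := by
    rw [Complex.norm_def, Complex.normSq_mk]; ring_nf
  have hcos : Real.cos (Complex.arg ⟨t,e⟩) = t / Real.sqrt (t^2+e^2) := by
    rw [Complex.cos_arg hz, habs]
  have hcos2 : 0 ≤ Real.cos (Complex.arg ⟨t,e⟩ / 2) := by
    apply Real.cos_nonneg_of_mem_Icc
    constructor
    · have := Complex.neg_pi_lt_arg (⟨t,e⟩ : ℂ); linarith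
    · have := Complex.arg_le_pi (⟨t,e⟩ : ℂ); linarith
  have hx0 : 0 ≤ Real.sqrt (Real.sqrt (t^2+e^2)) * Real.cos (Complex.arg ⟨t,e⟩/2) :=
    mul_nonneg (Real.sqrt_nonneg _) hcos2
  have hsq : (Real.sqrt (Real.sqrt (t^2+e^2)) * Real.cos (Complex.arg ⟨t,e⟩/2))^(2:ℕ)
      = (Real.sqrt (t^2+e^2) + t)/2 := by
    rw [mul_pow, Real.sq_sqrt hr.le, Real.cos_sq]
    rw [show 2 * (Complex.arg ⟨t,e⟩ / 2) = Complex.arg ⟨t,e⟩ by ring, hcos]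
    field_simp
  rw [← hsq, ← Real.rpow_natCast (Real.sqrt (Real.sqrt (t^2+e^2)) * Real.cos (Complex.arg ⟨t,e⟩/2)) 2,
    ← Real.rpow_mul hx0]
  norm_num

lemma vzeta_eq (s ζ t e : ℝ) (he : 0 < e) : vzeta s ζ t e = Vc s ζ t e := by
  unfold vzeta Vc Ucart
  rw [Ucart_eq' s t e he]

set_option maxHeartbeats 1000000 in
/-- With `s ∈ (0,1)`, `a = 1 - 2s`, `ζ ∈ ℝ`, in the upper half-plane
`{η > 0}` one has `L_a v_ζ = ∂²_τ v_ζ + ∂²_η v_ζ + (a/η) ∂_η v_ζ = (ζ/(1-a)) U_τ`. -/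
theorem stmt_5 (s a ζ : ℝ) (hs : s ∈ Set.Ioo (0:ℝ) 1) (ha : a = 1 - 2 * s)
    (τ η : ℝ) (hη : 0 < η) :
    deriv (fun t : ℝ => deriv (fun t' : ℝ => vzeta s ζ t' η) t) τ
      + deriv (fun e : ℝ => deriv (fun e' : ℝ => vzeta s ζ τ e') e) η
      + (a / η) * deriv (fun e : ℝ => vzeta s ζ τ e) η
      = (ζ / (1 - a)) * deriv (fun t : ℝ => Ucart s t η) τ := by
  have hs0 : (0:ℝ) < s := hs.1
  have hηne : η ≠ 0 := hη.ne'
  -- first term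
  have hfun1 : (fun t' : ℝ => vzeta s ζ t' η) = fun t' => Vc s ζ t' η :=
    funext fun t' => vzeta_eq s ζ t' η hη
  have hder1 : (fun t : ℝ => deriv (fun t' : ℝ => vzeta s ζ t' η) t)
      = fun t => d1 s ζ η t := funext fun t => by
    rw [hfun1]; exact (hasDerivAt_Vc_t s ζ η t hηne).deriv
  have hT1 : deriv (fun t : ℝ => deriv (fun t' : ℝ => vzeta s ζ t' η) t) τ
      = dd1 s ζ η τ := by
    rw [hder1]; exact (hasDerivAt_d1 s ζ η τ hηne).deriv
  -- second term
  have hev : (fun e : ℝ => deriv (fun e' : ℝ => vzeta s ζ τ e') e)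
      =ᶠ[nhds η] fun e => d2 s ζ τ e := by
    filter_upwards [Ioi_mem_nhds hη] with e he
    have h2 : (fun e' : ℝ => vzeta s ζ τ e') =ᶠ[nhds e] fun e' => Vc s ζ τ e' := by
      filter_upwards [Ioi_mem_nhds he] with e' he'
      exact vzeta_eq s ζ τ e' he'
    rw [h2.deriv_eq]
    exact (hasDerivAt_Vc_e s ζ τ e (ne_of_gt he)).deriv
  have hT2 : deriv (fun e : ℝ => deriv (fun e' : ℝ => vzeta s ζ τ e') e) η
      = dd2 s ζ τ η := by
    rw [hev.deriv_eq]; exact (hasDerivAt_d2 s ζ τ η hηne).deriv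
  -- third term
  have hT3 : deriv (fun e : ℝ => vzeta s ζ τ e) η = d2 s ζ τ η := by
    have h2 : (fun e' : ℝ => vzeta s ζ τ e') =ᶠ[nhds η] fun e' => Vc s ζ τ e' := by
      filter_upwards [Ioi_mem_nhds hη] with e' he'
      exact vzeta_eq s ζ τ e' he'
    rw [h2.deriv_eq]
    exact (hasDerivAt_Vc_e s ζ τ η hηne).deriv
  -- RHS
  have hfun2 : (fun t : ℝ => Ucart s t η)
      = fun t => ((Real.sqrt (t^2+η^2) + t)/2) ^ s := by
    funext t
    have := Ucart_eq' s t η hη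
    unfold Ucart
    rw [show t^2 = t^(2:ℕ) by norm_num] at this ⊢
    exact this
  have hrη := hasDerivAt_r1 η τ hηne
  have hw : HasDerivAt (fun t : ℝ => (Real.sqrt (t^2+η^2) + t)/2)
      ((τ / Real.sqrt (τ^2+η^2) + 1)/2) τ := (hrη.add (hasDerivAt_id τ)).div_const 2
  have hT4 : deriv (fun t : ℝ => Ucart s t η) τ
      = (τ / Real.sqrt (τ^2+η^2) + 1)/2 * s * ((Real.sqrt (τ^2+η^2) + τ)/2) ^ (s-1) := by
    rw [hfun2]
    exact (hw.rpow_const (p := s) (Or.inl (wpos (t := τ) hηne).ne')).deriv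
  rw [hT1, hT2, hT3, hT4]
  -- algebra
  subst ha
  have hrpos := sqrtpos (t := τ) hηne
  have hr2 : Real.sqrt (τ^2+η^2) ^ 2 = τ^2+η^2 := Real.sq_sqrt (by positivity)
  have hwpos := wpos (t := τ) hηne
  have hWne : ((Real.sqrt (τ^2+η^2) + τ)/2) ≠ 0 := hwpos.ne'
  have e1 : ((Real.sqrt (τ^2+η^2) + τ)/2) ^ s
      = ((Real.sqrt (τ^2+η^2) + τ)/2) ^ (s-1) * ((Real.sqrt (τ^2+η^2) + τ)/2) := by
    rw [← Real.rpow_add_one hWne (s-1), sub_add_cancel]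
  have e2 : ((Real.sqrt (τ^2+η^2) + τ)/2) ^ (s-1)
      = ((Real.sqrt (τ^2+η^2) + τ)/2) ^ (s-1-1) * ((Real.sqrt (τ^2+η^2) + τ)/2) := by
    rw [← Real.rpow_add_one hWne (s-1-1), sub_add_cancel]
  unfold dd1 dd2 d2
  rw [e1, e2]
  generalize ((Real.sqrt (τ^2+η^2) + τ)/2) ^ (s-1-1) = G
  generalize hR : Real.sqrt (τ^2+η^2) = r at *
  field_simp
  linear_combination (2*G*ζ*r^2*s + 4*G*ζ*r*τ*s - 2*G*ζ*r*τ*s^2 - 2*G*ζ*r^2*s^3 - 8*G*r*s^3 + 16*G*r*s^2 + 8*G*τ*s^2 + 2*G*ζ*τ^2*s) * hr2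
end
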